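/- Let R be a set of fixed-point-free involutions, S ⊆ [n] with |S| = m. The number of involutions τ of [n] with fixed-point set exactly S such that no subset K ⊆ [n] with τ(K) = K yields st(τ|_K) ∈ R-closure (i.e., τ I-avoids every pattern in R) equals the number of fixed-point-free involutions of [n−m] that I-avoid every pattern in R. In particular, the number of involutions of [n] with exactly m fixed points I-avoiding R equals C(n,m) times the number of fixed-point-free involutions of [n−m] I-avoiding R. -/

import Mathlib

/-- `τ` I-avoids every pattern in the family `R` of fixed-point-free involution
patterns: there is no occurrence of any `ρ ∈ R k` in `τ` that is a union of cycles of
`τ` (entries paired in `ρ` are paired in `τ`). -/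
def IAvoidsFPF (n : ℕ) (τ : Equiv.Perm (Fin n))
    (R : (k : ℕ) → Set (Equiv.Perm (Fin k))) : Prop :=
  ∀ k : ℕ, ∀ ρ ∈ R k, ¬ ∃ f : Fin k → Fin n, StrictMono f ∧ ∀ a, τ (f a) = f (ρ a)

open Finset Equiv

section Key
variable {n m : ℕ} {S : Finset (Fin n)}

/-- the order iso from `Fin (n-m)` to the complement of `S`. -/
noncomputable def cEmb (hc : #Sᶜ = n - m) : Fin (n - m) ≃o {x : Fin n // x ∈ Sᶜ} :=
  Sᶜ.orderIsoOfFin hc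

lemma card_compl_eq (hm : m = S.card) : #Sᶜ = n - m := by
  simp [Finset.card_compl, hm]

/-- extend a perm of the complement to all of `Fin n`. -/
noncomputable def extPerm (hc : #Sᶜ = n - m) (ρ : Perm (Fin (n - m))) : Perm (Fin n) :=
  ρ.extendDomain (cEmb hc).toEquiv

lemma extPerm_invol (hc : #Sᶜ = n - m) (ρ : Perm (Fin (n - m)))
    (hρ : Function.Involutive ⇑ρ) : Function.Involutive ⇑(extPerm hc ρ) := by
  have h1 : ρ * ρ = 1 := by
    ext x
    simp only [Equiv.Perm.mul_apply, Equiv.Perm.one_apply, Equiv.Perm.coe_one, id_eq]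
    exact congrArg Fin.val (hρ x)
  have : extPerm hc ρ * extPerm hc ρ = 1 := by
    rw [extPerm, Equiv.Perm.extendDomain_mul, h1, Equiv.Perm.extendDomain_one]
  intro x
  have := congrArg (fun σ : Perm (Fin n) => σ x) this
  simpa using this

lemma extPerm_fixed (hc : #Sᶜ = n - m) (ρ : Perm (Fin (n - m)))
    (hfpf : ∀ i, ρ i ≠ i) : {i : Fin n | extPerm hc ρ i = i} = ↑S := by
  ext x
  simp only [Set.mem_setOf_eq, Finset.coe_mem, Finset.mem_coe]
  constructor
  · intro hx
    rw [extPerm] at hx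
    by_contra hxS
    have hx' : x ∈ Sᶜ := Finset.mem_compl.2 hxS
    set j := (cEmb hc).symm ⟨x, hx'⟩ with hj
    have hxe : ((cEmb hc) j : Fin n) = x := by rw [hj]; simp
    have := Equiv.Perm.extendDomain_apply_image ρ (cEmb hc).toEquiv j
    rw [show ((cEmb hc).toEquiv j : Fin n) = x from hxe] at this
    rw [hx] at this
    have : ((cEmb hc) j : Fin n) = ((cEmb hc) (ρ j) : Fin n) := by
      rw [hxe]; exact this
    have : j = ρ j := by
      have := Subtype.ext this
      exact (cEmb hc).injective this
    exact hfpf j this.symm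
  · intro hx
    exact Equiv.Perm.extendDomain_apply_not_subtype ρ (cEmb hc).toEquiv
      (by simpa using hx)

lemma extPerm_avoids (hc : #Sᶜ = n - m) (ρ : Perm (Fin (n - m)))
    (R : (k : ℕ) → Set (Equiv.Perm (Fin k)))
    (hR : ∀ k, ∀ σ ∈ R k, Function.Involutive ⇑σ ∧ ∀ i, σ i ≠ i) :
    IAvoidsFPF n (extPerm hc ρ) R ↔ IAvoidsFPF (n - m) ρ R := by
  constructor
  · intro h k σ hσ ⟨g, hg, hocc⟩
    refine h k σ hσ ⟨fun a => ((cEmb hc) (g a) : Fin n), ?_, ?_⟩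
    · intro a b hab
      exact (cEmb hc).strictMono (hg hab)
    · intro a
      have := Equiv.Perm.extendDomain_apply_image ρ (cEmb hc).toEquiv (g a)
      rw [show ρ (g a) = g (σ a) from hocc a] at this
      exact this
  · intro h k σ hσ ⟨f, hf, hocc⟩
    -- each f a is a non-fixed point of extPerm, hence in Sᶜ
    have hmem : ∀ a, f a ∈ Sᶜ := by
      intro a
      by_contra hfa
      have hfix : ρ.extendDomain (cEmb hc).toEquiv (f a) = f a :=
        Equiv.Perm.extendDomain_apply_not_subtype ρ (cEmb hc).toEquiv hfa
      rw [show ρ.extendDomain (cEmb hc).toEquiv (f a) = extPerm hc ρ (f a) from rfl, hocc a] at hfix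
      exact (hR k σ hσ).2 a (hf.injective hfix)
    set g : Fin k → Fin (n - m) := fun a => (cEmb hc).symm ⟨f a, hmem a⟩ with hgdef
    refine h k σ hσ ⟨g, ?_, ?_⟩
    · intro a b hab
      exact (cEmb hc).symm.strictMono (show (⟨f a, hmem a⟩ : {x // x ∈ Sᶜ}) < ⟨f b, hmem b⟩ from hf hab)
    · intro a
      apply (cEmb hc).injective
      apply Subtype.ext
      have h1 : ((cEmb hc) (g a) : Fin n) = f a := by rw [hgdef]; simp
      have := Equiv.Perm.extendDomain_apply_image ρ (cEmb hc).toEquiv (g a)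
      rw [show ((cEmb hc).toEquiv (g a) : Fin n) = f a from h1] at this
      rw [show ρ.extendDomain (cEmb hc).toEquiv (f a) = extPerm hc ρ (f a) from rfl, hocc a] at this
      have h2 : ((cEmb hc) (g (σ a)) : Fin n) = f (σ a) := by rw [hgdef]; simp
      rw [← h2] at this
      exact this.symm
end Key

section Key2
variable {n m : ℕ} {S : Finset (Fin n)}

lemma compl_iff (τ : Perm (Fin n)) (hτ : Function.Involutive ⇑τ)
    (hfix : {i : Fin n | τ i = i} = ↑S) : ∀ x : Fin n, x ∈ Sᶜ ↔ τ x ∈ Sᶜ := by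
  have hS : ∀ x : Fin n, x ∈ S ↔ τ x = x := by
    intro x
    rw [← Finset.mem_coe, ← hfix]; rfl
  intro x
  simp only [Finset.mem_compl, hS]
  constructor
  · intro hx h2
    rw [hτ x] at h2
    exact hx h2.symm
  · intro hx h2
    apply hx
    rw [hτ x]
    exact h2.symm

/-- restrict an involution with fixed set `S` to the complement of `S`. -/
noncomputable def resPerm (hc : #Sᶜ = n - m) (τ : Perm (Fin n))
    (h : ∀ x : Fin n, x ∈ Sᶜ ↔ τ x ∈ Sᶜ) : Perm (Fin (n - m)) :=
  ((cEmb hc).toEquiv.symm.permCongr) (τ.subtypePerm (fun x => (h x).symm))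

lemma resPerm_apply (hc : #Sᶜ = n - m) (τ : Perm (Fin n))
    (h : ∀ x : Fin n, x ∈ Sᶜ ↔ τ x ∈ Sᶜ) (i : Fin (n - m)) :
    resPerm hc τ h i = (cEmb hc).symm ⟨τ ((cEmb hc) i), (h _).1 (Subtype.mem _)⟩ := by
  simp [resPerm, Equiv.permCongr_apply, Equiv.Perm.subtypePerm_apply]

lemma ext_res (hc : #Sᶜ = n - m) (τ : Perm (Fin n)) (hτ : Function.Involutive ⇑τ)
    (hfix : {i : Fin n | τ i = i} = ↑S) :
    extPerm hc (resPerm hc τ (compl_iff τ hτ hfix)) = τ := by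
  refine Equiv.ext fun x => ?_
  by_cases hx : x ∈ Sᶜ
  · set j := (cEmb hc).symm ⟨x, hx⟩ with hj
    have hxe : ((cEmb hc) j : Fin n) = x := by rw [hj]; simp
    have h1 := Equiv.Perm.extendDomain_apply_image
      (resPerm hc τ (compl_iff τ hτ hfix)) (cEmb hc).toEquiv j
    rw [show ((cEmb hc).toEquiv j : Fin n) = x from hxe] at h1
    rw [show (resPerm hc τ (compl_iff τ hτ hfix)).extendDomain (cEmb hc).toEquiv
        = extPerm hc (resPerm hc τ (compl_iff τ hτ hfix)) from rfl] at h1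
    rw [h1, resPerm_apply]
    simp only [RelIso.coe_fn_toEquiv, OrderIso.apply_symm_apply]
    exact congrArg τ hxe
  · have hxS : x ∈ S := by simpa using hx
    have hfx : τ x = x := by
      have : x ∈ {i : Fin n | τ i = i} := by rw [hfix]; exact hxS
      exact this
    rw [hfx, extPerm]
    exact Equiv.Perm.extendDomain_apply_not_subtype _ _ hx

lemma res_ext (hc : #Sᶜ = n - m) (ρ : Perm (Fin (n - m)))
    (h : ∀ x : Fin n, x ∈ Sᶜ ↔ extPerm hc ρ x ∈ Sᶜ) :
    resPerm hc (extPerm hc ρ) h = ρ := by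
  refine Equiv.ext fun i => ?_
  rw [resPerm_apply]
  have h1 := Equiv.Perm.extendDomain_apply_image ρ (cEmb hc).toEquiv i
  rw [show ρ.extendDomain (cEmb hc).toEquiv = extPerm hc ρ from rfl] at h1
  have : (⟨extPerm hc ρ ((cEmb hc) i), (h _).1 (Subtype.mem _)⟩ : {x // x ∈ Sᶜ})
      = (cEmb hc) (ρ i) := Subtype.ext h1
  rw [this, OrderIso.symm_apply_apply]

lemma res_invol (hc : #Sᶜ = n - m) (τ : Perm (Fin n)) (hτ : Function.Involutive ⇑τ)
    (h : ∀ x : Fin n, x ∈ Sᶜ ↔ τ x ∈ Sᶜ) :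
    Function.Involutive ⇑(resPerm hc τ h) := by
  intro i
  rw [resPerm_apply, resPerm_apply]
  simp only [OrderIso.apply_symm_apply]
  have h2 : ∀ hp, (⟨τ (τ ((cEmb hc) i)), hp⟩ : {x : Fin n // x ∈ Sᶜ}) = (cEmb hc) i :=
    fun _ => Subtype.ext (hτ _)
  rw [h2, OrderIso.symm_apply_apply]

lemma res_fpf (hc : #Sᶜ = n - m) (τ : Perm (Fin n))
    (hfix : {i : Fin n | τ i = i} = ↑S)
    (h : ∀ x : Fin n, x ∈ Sᶜ ↔ τ x ∈ Sᶜ) (i : Fin (n - m)) :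
    resPerm hc τ h i ≠ i := by
  rw [resPerm_apply]
  intro hcon
  have : (⟨τ ((cEmb hc) i), (h _).1 (Subtype.mem _)⟩ : {x // x ∈ Sᶜ}) = (cEmb hc) i := by
    have := congrArg (cEmb hc) hcon
    simpa using this
  have hτfix : τ ((cEmb hc) i) = ((cEmb hc) i : Fin n) := congrArg Subtype.val this
  have hmem : ((cEmb hc) i : Fin n) ∈ S := by
    have : ((cEmb hc) i : Fin n) ∈ {j : Fin n | τ j = j} := hτfix
    rw [hfix] at this; exact this
  have := ((cEmb hc) i).2
  rw [Finset.mem_compl] at this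
  exact this hmem

/-- the key bijection. -/
noncomputable def keyEquiv (hc : #Sᶜ = n - m) (R : (k : ℕ) → Set (Equiv.Perm (Fin k)))
    (hR : ∀ k, ∀ σ ∈ R k, Function.Involutive ⇑σ ∧ ∀ i, σ i ≠ i) :
    {τ : Equiv.Perm (Fin n) // Function.Involutive ⇑τ ∧
        {i : Fin n | τ i = i} = ↑S ∧ IAvoidsFPF n τ R} ≃
    {ρ : Equiv.Perm (Fin (n - m)) // Function.Involutive ⇑ρ ∧
        (∀ i, ρ i ≠ i) ∧ IAvoidsFPF (n - m) ρ R} where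
  toFun x := ⟨resPerm hc x.1 (compl_iff x.1 x.2.1 x.2.2.1),
    res_invol hc x.1 x.2.1 _,
    res_fpf hc x.1 x.2.2.1 _,
    by
      have := x.2.2.2
      rw [← ext_res hc x.1 x.2.1 x.2.2.1] at this
      exact (extPerm_avoids hc _ R hR).1 this⟩
  invFun y := ⟨extPerm hc y.1,
    extPerm_invol hc y.1 y.2.1,
    extPerm_fixed hc y.1 y.2.2.1,
    (extPerm_avoids hc y.1 R hR).2 y.2.2.2⟩
  left_inv x := Subtype.ext (ext_res hc x.1 x.2.1 x.2.2.1)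
  right_inv y := Subtype.ext (res_ext hc y.1 (compl_iff _ (extPerm_invol hc y.1 y.2.1) (extPerm_fixed hc y.1 y.2.2.1)))

lemma key_card (hm : m = S.card) (R : (k : ℕ) → Set (Equiv.Perm (Fin k)))
    (hR : ∀ k, ∀ σ ∈ R k, Function.Involutive ⇑σ ∧ ∀ i, σ i ≠ i) :
    Nat.card {τ : Equiv.Perm (Fin n) // Function.Involutive ⇑τ ∧
        {i : Fin n | τ i = i} = ↑S ∧ IAvoidsFPF n τ R} =
    Nat.card {ρ : Equiv.Perm (Fin (n - m)) // Function.Involutive ⇑ρ ∧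
        (∀ i, ρ i ≠ i) ∧ IAvoidsFPF (n - m) ρ R} :=
  Nat.card_congr (keyEquiv (card_compl_eq hm) R hR)
end Key2

section Part2
variable {n m : ℕ}

/-- the fixed-point set of a permutation as a finset. -/
def fixSet (τ : Perm (Fin n)) : Finset (Fin n) := Finset.univ.filter (fun i => τ i = i)

lemma coe_fixSet (τ : Perm (Fin n)) : (↑(fixSet τ) : Set (Fin n)) = {i : Fin n | τ i = i} := by
  ext i; simp [fixSet]

lemma card_fix (τ : Perm (Fin n)) : Nat.card {i : Fin n // τ i = i} = (fixSet τ).card := by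
  rw [Nat.card_eq_fintype_card, Fintype.card_subtype]
  rfl

/-- group involutions by their fixed-point set. -/
noncomputable def sigmaEquiv (R : (k : ℕ) → Set (Equiv.Perm (Fin k))) (m : ℕ) :
    {τ : Equiv.Perm (Fin n) // Function.Involutive ⇑τ ∧
        Nat.card {i : Fin n | τ i = i} = m ∧ IAvoidsFPF n τ R} ≃
    Σ s : {s : Finset (Fin n) // s.card = m},
      {τ : Equiv.Perm (Fin n) // Function.Involutive ⇑τ ∧
        {i : Fin n | τ i = i} = ↑s.1 ∧ IAvoidsFPF n τ R} where
  toFun x := ⟨⟨fixSet x.1, by rw [← card_fix x.1]; exact x.2.2.1⟩,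
    ⟨x.1, x.2.1, (coe_fixSet x.1).symm, x.2.2.2⟩⟩
  invFun y := ⟨y.2.1, y.2.2.1, by
      rw [show ({i : Fin n | y.2.1 i = i} : Type) = {i : Fin n // y.2.1 i = i} from rfl,
        card_fix]
      rw [show fixSet y.2.1 = y.1.1 from
        Finset.coe_injective (by rw [coe_fixSet, y.2.2.2.1])]
      exact y.1.2, y.2.2.2.2⟩
  left_inv x := Subtype.ext rfl
  right_inv y := by
    obtain ⟨⟨s, hs⟩, ⟨τ, h1, h2, h3⟩⟩ := y
    have heq : fixSet τ = s := Finset.coe_injective (by rw [coe_fixSet, h2])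
    subst heq
    rfl

lemma part2 (R : (k : ℕ) → Set (Equiv.Perm (Fin k)))
    (hR : ∀ k, ∀ σ ∈ R k, Function.Involutive ⇑σ ∧ ∀ i, σ i ≠ i) (m : ℕ) :
    Nat.card {τ : Equiv.Perm (Fin n) // Function.Involutive ⇑τ ∧
        Nat.card {i : Fin n | τ i = i} = m ∧ IAvoidsFPF n τ R} =
      Nat.choose n m *
        Nat.card {ρ : Equiv.Perm (Fin (n - m)) // Function.Involutive ⇑ρ ∧
          (∀ i, ρ i ≠ i) ∧ IAvoidsFPF (n - m) ρ R} := by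
  classical
  rw [Nat.card_congr (sigmaEquiv R m)]
  haveI : ∀ s : {s : Finset (Fin n) // s.card = m},
      Fintype {τ : Equiv.Perm (Fin n) // Function.Involutive ⇑τ ∧
        {i : Fin n | τ i = i} = ↑s.1 ∧ IAvoidsFPF n τ R} := fun s => Fintype.ofFinite _
  rw [Nat.card_eq_fintype_card, Fintype.card_sigma]
  have hterm : ∀ s : {s : Finset (Fin n) // s.card = m},
      Fintype.card {τ : Equiv.Perm (Fin n) // Function.Involutive ⇑τ ∧
        {i : Fin n | τ i = i} = ↑s.1 ∧ IAvoidsFPF n τ R} =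
      Nat.card {ρ : Equiv.Perm (Fin (n - m)) // Function.Involutive ⇑ρ ∧
          (∀ i, ρ i ≠ i) ∧ IAvoidsFPF (n - m) ρ R} := by
    intro s
    rw [← Nat.card_eq_fintype_card]
    exact key_card s.2.symm R hR
  rw [Finset.sum_congr rfl (fun s _ => hterm s), Finset.sum_const, smul_eq_mul]
  congr 1
  rw [Finset.card_univ, Fintype.card_subtype]
  have : Finset.univ.filter (fun s : Finset (Fin n) => s.card = m)
      = Finset.powersetCard m Finset.univ := by
    ext s; simp [Finset.mem_powersetCard_univ]
  rw [this, Finset.card_powersetCard, Finset.card_univ, Fintype.card_fin]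

end Part2

/-- For a family `R` of fixed-point-free involution patterns and `S ⊆ [n]` with
`|S| = m`, the number of involutions of `[n]` with fixed-point set exactly `S`
I-avoiding `R` equals the number of fixed-point-free involutions of `[n−m]`
I-avoiding `R`; in particular the number of involutions of `[n]` with exactly `m`
fixed points I-avoiding `R` is `C(n,m)` times that quantity. -/
theorem fixed_point_removal (n : ℕ) (R : (k : ℕ) → Set (Equiv.Perm (Fin k)))
    (hR : ∀ k, ∀ ρ ∈ R k, Function.Involutive ⇑ρ ∧ ∀ i, ρ i ≠ i)
    (S : Finset (Fin n)) (m : ℕ) (hm : m = S.card) :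
    Nat.card {τ : Equiv.Perm (Fin n) // Function.Involutive ⇑τ ∧
        {i : Fin n | τ i = i} = ↑S ∧ IAvoidsFPF n τ R} =
      Nat.card {ρ : Equiv.Perm (Fin (n - m)) // Function.Involutive ⇑ρ ∧
        (∀ i, ρ i ≠ i) ∧ IAvoidsFPF (n - m) ρ R} ∧
    Nat.card {τ : Equiv.Perm (Fin n) // Function.Involutive ⇑τ ∧
        Nat.card {i : Fin n // τ i = i} = m ∧ IAvoidsFPF n τ R} =
      Nat.choose n m *
        Nat.card {ρ : Equiv.Perm (Fin (n - m)) // Function.Involutive ⇑ρ ∧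
          (∀ i, ρ i ≠ i) ∧ IAvoidsFPF (n - m) ρ R} :=
  ⟨key_card hm R hR, part2 R hR m⟩
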